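/- arXiv:1402.6484 — 4 statements merged into one kernel-verified Lean document; each statement's English description precedes it below -/
import Mathlib

section
/- Let α ∈ ℝ be irrational. Equip the 2-torus T² = (ℝ/ℤ) × (ℝ/ℤ) with its Haar probability measure μ. Then for every continuous function f : T² → ℝ and every point p ∈ T², the time averages along the linear flow with direction (1, α) converge to the space average: (1/T) ∫₀^T f(p + ([t], [α·t])) dt → ∫_{T²} f dμ as T → ∞, where [s] denotes the class of s ∈ ℝ in ℝ/ℤ. -/
open MeasureTheory Filter Set Submodule Complex Real Algebra ContinuousMap

noncomputable section
namespace IrrFlowAux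

local instance fact01 : Fact ((0:ℝ) < 1) := ⟨one_pos⟩

instance : IsProbabilityMeasure (volume : Measure (AddCircle (1:ℝ))) :=
  ⟨by rw [AddCircle.measure_univ]; norm_num⟩

abbrev G : Type := AddCircle (1:ℝ) × AddCircle (1:ℝ)

instance : IsProbabilityMeasure (volume : Measure G) := by
  constructor
  rw [Measure.volume_eq_prod, ← Set.univ_prod_univ, Measure.prod_prod]
  simp

/-- characters on the torus -/
def char (mn : ℤ × ℤ) : C(G, ℂ) :=
  ((fourier mn.1).comp ⟨Prod.fst, continuous_fst⟩) *
    ((fourier mn.2).comp ⟨Prod.snd, continuous_snd⟩)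

lemma char_apply (mn : ℤ × ℤ) (z : G) : char mn z = fourier mn.1 z.1 * fourier mn.2 z.2 := rfl

lemma fourier_add_arg {T : ℝ} (n : ℤ) (x y : AddCircle T) :
    fourier n (x + y) = fourier n x * fourier n y := by
  simp [fourier_apply, smul_add, AddCircle.toCircle_add]

lemma integral_fourier_eq_zero {k : ℤ} (hk : k ≠ 0) :
    ∫ x, fourier k x ∂(volume : Measure (AddCircle (1:ℝ))) = 0 := by
  rw [← AddCircle.intervalIntegral_preimage (1:ℝ) 0 (fourier k)]
  have hc : (2 * (π:ℂ) * I * k) ≠ 0 := by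
    simp [Real.pi_ne_zero, Complex.I_ne_zero, hk, Complex.ofReal_ne_zero]
  have h1 : ∀ x : ℝ, fourier k (x : AddCircle (1:ℝ)) = Complex.exp ((2 * (π:ℂ) * I * k) * x) := by
    intro x; rw [fourier_coe_apply]; norm_num
  rw [intervalIntegral.integral_congr (g := fun x : ℝ => Complex.exp ((2 * (π:ℂ) * I * k) * x))
    (fun x _ => h1 x)]
  rw [integral_exp_mul_complex hc]
  have h2 : Complex.exp ((2 * (π:ℂ) * I * k) * ((0:ℝ) + 1 : ℝ)) = 1 := by
    norm_num
    rw [show (2 * (π:ℂ) * I * k) = (k:ℂ) * (2 * π * I) by push_cast; ring]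
    exact Complex.exp_int_mul_two_pi_mul_I k
  rw [h2]
  norm_num

lemma integral_char {mn : ℤ × ℤ} (h : mn ≠ 0) :
    ∫ z, char mn z ∂(volume : Measure G) = 0 := by
  have key : ∫ z, char mn z ∂(volume : Measure G)
      = (∫ x, fourier mn.1 x ∂(volume : Measure (AddCircle (1:ℝ))))
        * (∫ y, fourier mn.2 y ∂(volume : Measure (AddCircle (1:ℝ)))) := by
    simp_rw [char_apply]
    rw [Measure.volume_eq_prod]
    exact integral_prod_mul (fun x => fourier mn.1 x) (fun y => fourier mn.2 y)
  rw [key]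
  rcases eq_or_ne mn.1 0 with h1 | h1
  · have h2 : mn.2 ≠ 0 := by
      intro h2; exact h (Prod.ext h1 h2)
    rw [integral_fourier_eq_zero h2, mul_zero]
  · rw [integral_fourier_eq_zero h1, zero_mul]

lemma char_flow (α : ℝ) (p : G) (mn : ℤ × ℤ) (t : ℝ) :
    char mn (p + ((t : AddCircle (1:ℝ)), ((α * t : ℝ) : AddCircle (1:ℝ))))
      = char mn p * Complex.exp ((((2 * π * (mn.1 + mn.2 * α) : ℝ)) : ℂ) * I * t) := by
  have : (p + ((t : AddCircle (1:ℝ)), ((α * t : ℝ) : AddCircle (1:ℝ))))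
      = (p.1 + (t : AddCircle (1:ℝ)), p.2 + ((α * t : ℝ) : AddCircle (1:ℝ))) := rfl
  rw [this, char_apply, fourier_add_arg, fourier_add_arg, char_apply]
  rw [fourier_coe_apply, fourier_coe_apply]
  rw [show ((fourier mn.1) p.1 * Complex.exp (2 * ↑π * I * ↑mn.1 * ↑t / ((1:ℝ):ℂ)) *
      ((fourier mn.2) p.2 * Complex.exp (2 * ↑π * I * ↑mn.2 * ((α * t : ℝ) : ℂ) / ((1:ℝ):ℂ)))
      = (fourier mn.1) p.1 * (fourier mn.2) p.2 *
        (Complex.exp (2 * ↑π * I * ↑mn.1 * ↑t / ((1:ℝ):ℂ)) *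
         Complex.exp (2 * ↑π * I * ↑mn.2 * ((α * t : ℝ) : ℂ) / ((1:ℝ):ℂ)))) by ring]
  rw [← Complex.exp_add]
  congr 1
  push_cast
  ring

lemma freq_ne_zero {α : ℝ} (hα : Irrational α) {mn : ℤ × ℤ} (h : mn ≠ 0) :
    ((mn.1 : ℝ) + mn.2 * α) ≠ 0 := by
  intro hz
  rcases eq_or_ne mn.2 0 with h2 | h2
  · rw [h2] at hz
    push_cast at hz
    have h1 : (mn.1 : ℝ) = 0 := by linarith
    exact h (Prod.ext (by exact_mod_cast h1) h2)
  · have hm2 : (mn.2 : ℝ) ≠ 0 := Int.cast_ne_zero.mpr h2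
    have hval : α = ((- (mn.1 : ℚ) / (mn.2 : ℚ) : ℚ) : ℝ) := by
      push_cast
      field_simp
      linarith
    exact hα ⟨_, hval.symm⟩

lemma tendsto_char (α : ℝ) (hα : Irrational α) (p : G) (mn : ℤ × ℤ) :
    Tendsto (fun T : ℝ => (1/(T:ℂ)) * ∫ t in (0:ℝ)..T,
        char mn (p + ((t : AddCircle (1:ℝ)), ((α * t : ℝ) : AddCircle (1:ℝ)))))
      atTop (nhds (∫ z, char mn z ∂(volume : Measure G))) := by
  rcases eq_or_ne mn 0 with rfl | h
  · have hone : ∀ z : G, char 0 z = 1 := by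
      intro z; rw [char_apply]; simp [fourier_zero]
    have hint : ∫ z, char 0 z ∂(volume : Measure G) = 1 := by
      simp_rw [hone]; simp
    rw [hint]
    apply Tendsto.congr' (f₁ := fun _ : ℝ => (1:ℂ)) _ tendsto_const_nhds
    filter_upwards [eventually_gt_atTop (0:ℝ)] with T hT
    simp_rw [hone]
    symm
    rw [intervalIntegral.integral_const, sub_zero, Complex.real_smul, mul_one, one_div,
      inv_mul_cancel₀ (by exact_mod_cast hT.ne' : (T:ℂ) ≠ 0)]
  · set r : ℝ := (mn.1 : ℝ) + mn.2 * α with hr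
    have hrne : r ≠ 0 := freq_ne_zero hα h
    set c : ℂ := (((2 * π * r : ℝ)) : ℂ) * I with hc
    have hcne : c ≠ 0 := by
      simp [hc, Complex.ofReal_ne_zero, Real.pi_ne_zero, hrne, Complex.I_ne_zero]
    rw [integral_char h]
    have hint : ∀ T : ℝ, (∫ t in (0:ℝ)..T,
        char mn (p + ((t : AddCircle (1:ℝ)), ((α * t : ℝ) : AddCircle (1:ℝ)))))
        = char mn p * ((Complex.exp (c * T) - 1) / c) := by
      intro T
      rw [intervalIntegral.integral_congr (g := fun t : ℝ => char mn p * Complex.exp (c * t))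
        (fun t _ => by rw [char_flow])]
      rw [intervalIntegral.integral_const_mul, integral_exp_mul_complex hcne]
      norm_num
    simp_rw [hint]
    refine squeeze_zero_norm (a := fun T : ℝ => ‖(1:ℂ)/(T:ℂ)‖ * (‖char mn p‖ * (2 / ‖c‖)))
      (fun T => ?_) ?_
    · simp only [norm_mul, norm_div]
      gcongr
      rw [norm_sub_rev]
      calc ‖(1:ℂ) - Complex.exp (c * T)‖ ≤ ‖(1:ℂ)‖ + ‖Complex.exp (c * T)‖ := norm_sub_le _ _
        _ ≤ 2 := by
            rw [norm_one]
            have : ‖Complex.exp (c * T)‖ = 1 := by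
              rw [hc, show (((2 * π * r : ℝ)) : ℂ) * I * (T:ℂ) = ((2 * π * r * T : ℝ) : ℂ) * I by
                push_cast; ring]
              exact Complex.norm_exp_ofReal_mul_I _
            linarith [this.le, this.ge]
    · have h0 : Tendsto (fun T : ℝ => ‖(1:ℂ)/(T:ℂ)‖) atTop (nhds 0) := by
        have : (fun T : ℝ => ‖(1:ℂ)/(T:ℂ)‖) = fun T : ℝ => |T|⁻¹ := by
          ext T
          rw [norm_div, norm_one, one_div, Complex.norm_real, Real.norm_eq_abs]
        rw [this]
        exact tendsto_inv_atTop_zero.comp tendsto_abs_atTop_atTop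
      simpa using h0.mul_const (‖char mn p‖ * (2 / ‖c‖))

lemma char_zero_eq_one : char (0 : ℤ × ℤ) = 1 := by
  ext z; simp [char_apply, fourier_zero]

lemma char_add (a b : ℤ × ℤ) : char (a + b) = char a * char b := by
  ext z
  simp only [char_apply, ContinuousMap.mul_apply, Prod.fst_add, Prod.snd_add, fourier_add]
  ring

lemma char_neg (a : ℤ × ℤ) : char (-a) = star (char a) := by
  ext z
  simp only [char_apply, ContinuousMap.star_apply, Prod.fst_neg, Prod.snd_neg, fourier_neg,
    star_def, map_mul]

/-- The star subalgebra generated by the characters. -/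
def charSubalgebra : StarSubalgebra ℂ C(G, ℂ) where
  toSubalgebra := Algebra.adjoin ℂ (Set.range char)
  star_mem' := by
    show Algebra.adjoin ℂ (Set.range char) ≤ star (Algebra.adjoin ℂ (Set.range char))
    refine adjoin_le ?_
    rintro - ⟨mn, rfl⟩
    exact subset_adjoin ⟨-mn, by rw [char_neg]⟩

theorem charSubalgebra_coe :
    Subalgebra.toSubmodule charSubalgebra.toSubalgebra = span ℂ (Set.range char) := by
  apply adjoin_eq_span_of_subset
  refine Subset.trans ?_ Submodule.subset_span
  intro x hx
  refine Submonoid.closure_induction (fun _ => id) ⟨0, char_zero_eq_one⟩ ?_ hx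
  rintro - - - - ⟨a, rfl⟩ ⟨b, rfl⟩
  exact ⟨a + b, char_add a b⟩

theorem charSubalgebra_separatesPoints : charSubalgebra.SeparatesPoints := by
  intro x y hxy
  have : ¬(x.1 = y.1 ∧ x.2 = y.2) := fun hc => hxy (Prod.ext hc.1 hc.2)
  rcases not_and_or.mp this with h1 | h2
  · refine ⟨_, ⟨char (1, 0), subset_adjoin ⟨(1, 0), rfl⟩, rfl⟩, ?_⟩
    simp only [char_apply, fourier_one, fourier_zero, mul_one]
    contrapose! h1
    rw [Circle.coe_inj] at h1
    exact AddCircle.injective_toCircle one_ne_zero h1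
  · refine ⟨_, ⟨char (0, 1), subset_adjoin ⟨(0, 1), rfl⟩, rfl⟩, ?_⟩
    simp only [char_apply, fourier_one, fourier_zero, one_mul]
    contrapose! h2
    rw [Circle.coe_inj] at h2
    exact AddCircle.injective_toCircle one_ne_zero h2

theorem charSubalgebra_closure_eq_top : charSubalgebra.topologicalClosure = ⊤ :=
  ContinuousMap.starSubalgebra_topologicalClosure_eq_top_of_separatesPoints _
    charSubalgebra_separatesPoints

theorem span_char_closure_eq_top : (span ℂ (Set.range char)).topologicalClosure = ⊤ := by
  rw [← charSubalgebra_coe]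
  exact congr_arg (Subalgebra.toSubmodule <| StarSubalgebra.toSubalgebra ·)
    charSubalgebra_closure_eq_top

section Approx

variable (α : ℝ) (p : G)

/-- The flow orbit map. -/
def orbit (t : ℝ) : G := p + ((t : AddCircle (1:ℝ)), ((α * t : ℝ) : AddCircle (1:ℝ)))

lemma continuous_orbit : Continuous (orbit α p) := by
  apply continuous_const.add
  exact (AddCircle.continuous_mk' (1:ℝ)).prodMk
    ((AddCircle.continuous_mk' (1:ℝ)).comp (continuous_const.mul continuous_id))

lemma orbit_intervalIntegrable (g : C(G, ℂ)) (a b : ℝ) :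
    IntervalIntegrable (fun t => g (orbit α p t)) volume a b :=
  (g.continuous.comp (continuous_orbit α p)).intervalIntegrable a b

lemma contMap_integrable (g : C(G, ℂ)) : Integrable (fun z => g z) (volume : Measure G) :=
  g.continuous.integrable_of_hasCompactSupport
    (IsCompact.of_isClosed_subset isCompact_univ (isClosed_tsupport _) (subset_univ _))

/-- Property: the time averages of `g` along the flow converge to the space average. -/
def Good (g : C(G, ℂ)) : Prop :=
  Tendsto (fun T : ℝ => (1/(T:ℂ)) * ∫ t in (0:ℝ)..T, g (orbit α p t))
    atTop (nhds (∫ z, g z ∂(volume : Measure G)))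

lemma good_zero : Good α p 0 := by
  unfold Good
  simp only [ContinuousMap.zero_apply]
  simpa using (tendsto_const_nhds : Tendsto (fun _ : ℝ => (0:ℂ)) atTop (nhds 0))

lemma good_add {g h : C(G, ℂ)} (hg : Good α p g) (hh : Good α p h) : Good α p (g + h) := by
  unfold Good at *
  have key : ∀ T : ℝ, (1/(T:ℂ)) * ∫ t in (0:ℝ)..T, (g + h) (orbit α p t)
      = ((1/(T:ℂ)) * ∫ t in (0:ℝ)..T, g (orbit α p t))
        + ((1/(T:ℂ)) * ∫ t in (0:ℝ)..T, h (orbit α p t)) := by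
    intro T
    simp only [ContinuousMap.add_apply]
    rw [intervalIntegral.integral_add (orbit_intervalIntegrable α p g 0 T)
      (orbit_intervalIntegrable α p h 0 T)]
    ring
  simp only [key]
  have hint : ∫ z, (g + h) z ∂(volume : Measure G)
      = (∫ z, g z ∂(volume : Measure G)) + ∫ z, h z ∂(volume : Measure G) := by
    simp only [ContinuousMap.add_apply]
    exact integral_add (contMap_integrable g) (contMap_integrable h)
  rw [hint]
  exact hg.add hh

lemma good_smul (c : ℂ) {g : C(G, ℂ)} (hg : Good α p g) : Good α p (c • g) := by
  unfold Good at *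
  have key : ∀ T : ℝ, (1/(T:ℂ)) * ∫ t in (0:ℝ)..T, (c • g) (orbit α p t)
      = c * ((1/(T:ℂ)) * ∫ t in (0:ℝ)..T, g (orbit α p t)) := by
    intro T
    simp only [ContinuousMap.smul_apply, smul_eq_mul]
    rw [intervalIntegral.integral_const_mul]
    ring
  simp only [key]
  have hint : ∫ z, (c • g) z ∂(volume : Measure G) = c * ∫ z, g z ∂(volume : Measure G) := by
    simp only [ContinuousMap.smul_apply]
    rw [integral_smul, smul_eq_mul]
  rw [hint]
  exact hg.const_mul c

lemma good_span {g : C(G, ℂ)} (hg : g ∈ span ℂ (Set.range char)) (hα : Irrational α) :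
    Good α p g := by
  induction hg using Submodule.span_induction with
  | mem x hx =>
    obtain ⟨mn, rfl⟩ := hx
    exact tendsto_char α hα p mn
  | zero => exact good_zero α p
  | add x y _ _ hx hy => exact good_add α p hx hy
  | smul c x _ hx => exact good_smul α p c hx

lemma norm_timeAvg_le (g : C(G, ℂ)) {T : ℝ} (hT : 0 < T) :
    ‖(1/(T:ℂ)) * ∫ t in (0:ℝ)..T, g (orbit α p t)‖ ≤ ‖g‖ := by
  have h1 : ‖∫ t in (0:ℝ)..T, g (orbit α p t)‖ ≤ ‖g‖ * |T - 0| := by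
    apply intervalIntegral.norm_integral_le_of_norm_le_const
    intro x _
    exact g.norm_coe_le_norm _
  rw [sub_zero, abs_of_pos hT] at h1
  rw [norm_mul, norm_div, norm_one, Complex.norm_real, Real.norm_eq_abs, abs_of_pos hT]
  calc 1 / T * ‖∫ t in (0:ℝ)..T, g (orbit α p t)‖ ≤ 1 / T * (‖g‖ * T) := by
        apply mul_le_mul_of_nonneg_left h1 (by positivity)
    _ = ‖g‖ := by field_simp

lemma dist_timeAvg_le (g h : C(G, ℂ)) {T : ℝ} (hT : 0 < T) :
    dist ((1/(T:ℂ)) * ∫ t in (0:ℝ)..T, g (orbit α p t))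
      ((1/(T:ℂ)) * ∫ t in (0:ℝ)..T, h (orbit α p t)) ≤ dist g h := by
  rw [dist_eq_norm]
  have heq : (1/(T:ℂ)) * (∫ t in (0:ℝ)..T, g (orbit α p t))
      - (1/(T:ℂ)) * (∫ t in (0:ℝ)..T, h (orbit α p t))
      = (1/(T:ℂ)) * ∫ t in (0:ℝ)..T, (g - h) (orbit α p t) := by
    simp only [ContinuousMap.sub_apply]
    rw [intervalIntegral.integral_sub (orbit_intervalIntegrable α p g 0 T)
      (orbit_intervalIntegrable α p h 0 T)]
    ring
  rw [heq, dist_eq_norm]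
  exact norm_timeAvg_le α p (g - h) hT

lemma dist_integral_le (g h : C(G, ℂ)) :
    dist (∫ z, g z ∂(volume : Measure G)) (∫ z, h z ∂(volume : Measure G)) ≤ dist g h := by
  rw [dist_eq_norm, ← integral_sub (contMap_integrable g) (contMap_integrable h)]
  have hb : ∀ z : G, ‖g z - h z‖ ≤ ‖g - h‖ := by
    intro z
    simpa only [ContinuousMap.sub_apply] using (g - h).norm_coe_le_norm z
  calc ‖∫ z, (g z - h z) ∂(volume : Measure G)‖
      ≤ ‖g - h‖ * ((volume : Measure G) Set.univ).toReal :=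
        norm_integral_le_of_norm_le_const (Filter.Eventually.of_forall hb)
    _ = dist g h := by rw [measure_univ, ENNReal.toReal_one, mul_one, dist_eq_norm]

lemma good_all (hα : Irrational α) (g : C(G, ℂ)) : Good α p g := by
  unfold Good
  rw [Metric.tendsto_nhds]
  intro ε hε
  have hg_mem : g ∈ closure ((span ℂ (Set.range char) : Submodule ℂ C(G, ℂ)) : Set C(G, ℂ)) := by
    have h1 : g ∈ ((span ℂ (Set.range char)).topologicalClosure : Set C(G, ℂ)) := by
      rw [span_char_closure_eq_top]; trivial
    exact h1
  obtain ⟨h, hh_mem, hgh⟩ := Metric.mem_closure_iff.mp hg_mem (ε/3) (by linarith)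
  have hgood : Good α p h := good_span α p hh_mem hα
  have hev : ∀ᶠ T : ℝ in atTop, dist ((1/(T:ℂ)) * ∫ t in (0:ℝ)..T, h (orbit α p t))
      (∫ z, h z ∂(volume : Measure G)) < ε/3 :=
    (Metric.tendsto_nhds.mp hgood) (ε/3) (by linarith)
  filter_upwards [hev, eventually_gt_atTop (0:ℝ)] with T hT1 hT2
  have key1 := dist_timeAvg_le α p g h hT2
  have key2 := dist_integral_le h g
  have htri := dist_triangle4 ((1/(T:ℂ)) * ∫ t in (0:ℝ)..T, g (orbit α p t))
    ((1/(T:ℂ)) * ∫ t in (0:ℝ)..T, h (orbit α p t))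
    (∫ z, h z ∂(volume : Measure G)) (∫ z, g z ∂(volume : Measure G))
  have hghd : dist g h < ε/3 := hgh
  have hhg : dist h g < ε/3 := by rwa [dist_comm]
  calc dist ((1/(T:ℂ)) * ∫ t in (0:ℝ)..T, g (orbit α p t)) (∫ z, g z ∂(volume : Measure G))
      ≤ _ := htri
    _ < ε/3 + ε/3 + ε/3 := by
        have := lt_of_le_of_lt key1 hghd
        have := lt_of_le_of_lt key2 hhg
        gcongr <;> assumption
    _ = ε := by ring

end Approx

end IrrFlowAux

open IrrFlowAux
/-- Unique ergodicity of the irrational linear flow on the 2-torus: for every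
irrational `α`, continuous `f` and every starting point `p`, the time averages of `f` along the
flow with direction `(1, α)` converge to the space average of `f` with respect to the Haar
probability measure. -/
theorem irrational_linear_flow_time_averages_converge
    (α : ℝ) (hα : Irrational α)
    (f : AddCircle (1 : ℝ) × AddCircle (1 : ℝ) → ℝ) (hf : Continuous f)
    (p : AddCircle (1 : ℝ) × AddCircle (1 : ℝ)) :
    Tendsto (fun T : ℝ => (1 / T) * ∫ t in (0:ℝ)..T,
        f (p + ((t : AddCircle (1 : ℝ)), ((α * t : ℝ) : AddCircle (1 : ℝ)))))
      atTop (nhds (∫ x, f x ∂(volume : Measure (AddCircle (1 : ℝ) × AddCircle (1 : ℝ))))) := by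
  let g : C(G, ℂ) := ⟨fun z => ((f z : ℝ) : ℂ), Complex.continuous_ofReal.comp hf⟩
  have hmain : Good α p g := good_all α p hα g
  have h1 : ∀ T : ℝ, (1 / T) * ∫ t in (0:ℝ)..T,
      f (p + ((t : AddCircle (1 : ℝ)), ((α * t : ℝ) : AddCircle (1 : ℝ))))
      = ((1/(T:ℂ)) * ∫ t in (0:ℝ)..T, g (orbit α p t)).re := by
    intro T
    have e1 : (∫ t in (0:ℝ)..T, g (orbit α p t))
        = ((∫ t in (0:ℝ)..T, f (orbit α p t) : ℝ) : ℂ) := intervalIntegral.integral_ofReal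
    rw [e1, show (1/(T:ℂ)) = (((1/T : ℝ)) : ℂ) by push_cast; ring, ← Complex.ofReal_mul,
      Complex.ofReal_re]
    rfl
  have h2 : (∫ x, f x ∂(volume : Measure (AddCircle (1 : ℝ) × AddCircle (1 : ℝ))))
      = (∫ z, g z ∂(volume : Measure G)).re := by
    have : (∫ z, g z ∂(volume : Measure G))
        = ((∫ z, f z ∂(volume : Measure G) : ℝ) : ℂ) := integral_ofReal
    rw [this, Complex.ofReal_re]
  rw [funext h1, h2]
  exact (Complex.continuous_re.tendsto _).comp hmain
end
end

section
/- Let a < d be real numbers, let ρ : ℝ → ℝ be continuous and positive on (a,d), and let X̄ ∈ ℝ³ be a constant vector with first component 0. Set X(p) := ρ(p₁) • X̄. Let ν̃ : ℝ³ → (ℝ³ →L[ℝ] ℝ) be a C¹ toroidally periodic 1-form satisfying i_X dν̃ = 0, i.e. Dν̃(p)(X(p))(v) = Dν̃(p)(v)(X(p)) for all p ∈ (a,d) × ℝ² and all v ∈ ℝ³. Then the function c(r) := ∫_{[0,1]²} ν̃(r, θ, φ)(X̄) dθ dφ is constant on (a,d). -/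
open Set

/-- A map on `ℝ³ = ℝ × ℝ × ℝ` is toroidally periodic if it is invariant under translation by `1`
in the second and in the third coordinate, so that it descends to `ℝ × T²`. -/
def TorPeriodic {α : Type*} (f : ℝ × ℝ × ℝ → α) : Prop :=
  ∀ p : ℝ × ℝ × ℝ, f (p.1, p.2.1 + 1, p.2.2) = f p ∧ f (p.1, p.2.1, p.2.2 + 1) = f p

/-- Swap two nested interval integrals of a jointly continuous function (ordered bounds). -/
lemma swap_intervalIntegral_le (F : ℝ → ℝ → ℝ)
    (hF : Continuous fun q : ℝ × ℝ => F q.1 q.2) {a b c d : ℝ} (hab : a ≤ b) (hcd : c ≤ d) :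
    (∫ x in a..b, ∫ y in c..d, F x y) = ∫ y in c..d, ∫ x in a..b, F x y := by
  have hint : MeasureTheory.Integrable (Function.uncurry F)
      ((MeasureTheory.volume.restrict (Ioc a b)).prod
        (MeasureTheory.volume.restrict (Ioc c d))) := by
    rw [MeasureTheory.Measure.prod_restrict, ← MeasureTheory.Measure.volume_eq_prod ℝ ℝ]
    exact ((hF.locallyIntegrable).integrableOn_isCompact (isCompact_Icc.prod isCompact_Icc)).mono_set
      (Set.prod_mono Ioc_subset_Icc_self Ioc_subset_Icc_self)
  rw [intervalIntegral.integral_of_le hab, intervalIntegral.integral_of_le hcd]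
  simp_rw [intervalIntegral.integral_of_le hcd, intervalIntegral.integral_of_le hab]
  exact MeasureTheory.integral_integral_swap hint

/-- Swap with outer bounds `0..1` and arbitrary inner bounds. -/
lemma swap_intervalIntegral01 (F : ℝ → ℝ → ℝ)
    (hF : Continuous fun q : ℝ × ℝ => F q.1 q.2) (s t : ℝ) :
    (∫ x in (0:ℝ)..1, ∫ y in s..t, F x y) = ∫ y in s..t, ∫ x in (0:ℝ)..1, F x y := by
  rcases le_total s t with h | h
  · exact swap_intervalIntegral_le F hF zero_le_one h
  · have h0 := swap_intervalIntegral_le F hF zero_le_one h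
    rw [intervalIntegral.integral_symm t s]
    simp_rw [intervalIntegral.integral_symm t s]
    rw [intervalIntegral.integral_neg, h0]

/-- Derivative of a `C¹` form evaluated along a line, in a fixed direction. -/
lemma hasDerivAt_line (ν : ℝ × ℝ × ℝ → (ℝ × ℝ × ℝ →L[ℝ] ℝ)) (hν : ContDiff ℝ 1 ν)
    (w u : ℝ × ℝ × ℝ) {L : ℝ → ℝ × ℝ × ℝ} {t : ℝ} (hL : HasDerivAt L u t) :
    HasDerivAt (fun s => ν (L s) w) (fderiv ℝ ν (L t) u w) t := by
  have h1 : HasFDerivAt ν (fderiv ℝ ν (L t)) (L t) :=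
    (hν.differentiable one_ne_zero (L t)).hasFDerivAt
  have h2 : HasFDerivAt (fun p => ν p w)
      ((ContinuousLinearMap.apply ℝ ℝ w).comp (fderiv ℝ ν (L t))) (L t) :=
    (ContinuousLinearMap.apply ℝ ℝ w).hasFDerivAt.comp (L t) h1
  have h3 := h2.comp_hasDerivAt t hL
  simp only [ContinuousLinearMap.comp_apply, ContinuousLinearMap.apply_apply] at h3
  exact h3

/-- For a vector field `X(p) = ρ(p₁) • X̄` tangent to the tori `{r} × T²` and a
`C¹` toroidally periodic `1`-form `ν` with `i_X dν = 0` on `(a,d) × T²`, the torus average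
`c(r) = ∫ ν(r,θ,φ)(X̄) dθ dφ` is constant in `r ∈ (a,d)`. -/
theorem torus_average_of_stabilizing_form_constant
    (a d : ℝ) (had : a < d)
    (ρ : ℝ → ℝ) (hρcont : Continuous ρ) (hρpos : ∀ r ∈ Ioo a d, 0 < ρ r)
    (Xbar : ℝ × ℝ × ℝ) (hXbar : Xbar.1 = 0)
    (X : ℝ × ℝ × ℝ → ℝ × ℝ × ℝ) (hX : ∀ p, X p = ρ p.1 • Xbar)
    (ν : ℝ × ℝ × ℝ → (ℝ × ℝ × ℝ →L[ℝ] ℝ))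
    (hνC1 : ContDiff ℝ 1 ν) (hνper : TorPeriodic ν)
    (hiXdν : ∀ p : ℝ × ℝ × ℝ, p.1 ∈ Ioo a d →
      ∀ v : ℝ × ℝ × ℝ, fderiv ℝ ν p (X p) v = fderiv ℝ ν p v (X p)) :
    ∀ r₁ ∈ Ioo a d, ∀ r₂ ∈ Ioo a d,
      (∫ θ in (0:ℝ)..1, ∫ φ in (0:ℝ)..1, ν (r₁, θ, φ) Xbar) =
      (∫ θ in (0:ℝ)..1, ∫ φ in (0:ℝ)..1, ν (r₂, θ, φ) Xbar) := by
  intro r₁ hr₁ r₂ hr₂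
  -- basic continuity facts
  have hνcont : Continuous ν := hνC1.continuous
  have hDcont : Continuous (fderiv ℝ ν) := hνC1.continuous_fderiv one_ne_zero
  have hDcont2 : ∀ u w : ℝ × ℝ × ℝ, Continuous fun p => fderiv ℝ ν p u w := fun u w =>
    (hDcont.clm_apply continuous_const).clm_apply continuous_const
  -- abbreviations for the coordinate directions
  set e1 : ℝ × ℝ × ℝ := (1, 0, 0) with he1
  set e2 : ℝ × ℝ × ℝ := (0, 1, 0) with he2
  set e3 : ℝ × ℝ × ℝ := (0, 0, 1) with he3
  -- FTC in the radial direction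
  have hA : ∀ θ φ : ℝ, ν (r₂, θ, φ) Xbar - ν (r₁, θ, φ) Xbar
      = ∫ r in r₁..r₂, fderiv ℝ ν (r, θ, φ) e1 Xbar := by
    intro θ φ
    have hd : ∀ r ∈ uIcc r₁ r₂, HasDerivAt (fun r : ℝ => ν (r, θ, φ) Xbar)
        (fderiv ℝ ν (r, θ, φ) e1 Xbar) r := by
      intro r _
      exact hasDerivAt_line ν hνC1 Xbar e1
        ((HasDerivAt.prodMk (hasDerivAt_id r) (hasDerivAt_const r ((θ : ℝ), (φ : ℝ)))))
    have hint : IntervalIntegrable (fun r : ℝ => fderiv ℝ ν (r, θ, φ) e1 Xbar)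
        MeasureTheory.volume r₁ r₂ :=
      (((hDcont2 e1 Xbar).comp (by fun_prop : Continuous fun r : ℝ => ((r : ℝ), θ, φ)))).intervalIntegrable _ _
    exact (intervalIntegral.integral_eq_sub_of_hasDerivAt hd hint).symm
  -- FTC plus periodicity kills the angular integrals of the angular derivatives
  have hzero2 : ∀ r φ : ℝ, (∫ θ in (0:ℝ)..1, fderiv ℝ ν (r, θ, φ) e2 e1) = 0 := by
    intro r φ
    have hd : ∀ θ ∈ uIcc (0:ℝ) 1, HasDerivAt (fun θ : ℝ => ν (r, θ, φ) e1)
        (fderiv ℝ ν (r, θ, φ) e2 e1) θ := by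
      intro θ _
      exact hasDerivAt_line ν hνC1 e1 e2
        (HasDerivAt.prodMk (hasDerivAt_const θ r) (HasDerivAt.prodMk (hasDerivAt_id θ) (hasDerivAt_const θ φ)))
    have hint : IntervalIntegrable (fun θ : ℝ => fderiv ℝ ν (r, θ, φ) e2 e1)
        MeasureTheory.volume 0 1 :=
      (((hDcont2 e2 e1).comp (by fun_prop : Continuous fun θ : ℝ => ((r : ℝ), θ, φ)))).intervalIntegrable _ _
    rw [intervalIntegral.integral_eq_sub_of_hasDerivAt hd hint]
    have := (hνper (r, 0, φ)).1
    simp only [zero_add] at this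
    rw [this]
    ring
  have hzero3 : ∀ r θ : ℝ, (∫ φ in (0:ℝ)..1, fderiv ℝ ν (r, θ, φ) e3 e1) = 0 := by
    intro r θ
    have hd : ∀ φ ∈ uIcc (0:ℝ) 1, HasDerivAt (fun φ : ℝ => ν (r, θ, φ) e1)
        (fderiv ℝ ν (r, θ, φ) e3 e1) φ := by
      intro φ _
      exact hasDerivAt_line ν hνC1 e1 e3
        (HasDerivAt.prodMk (hasDerivAt_const φ r) (HasDerivAt.prodMk (hasDerivAt_const φ θ) (hasDerivAt_id φ)))
    have hint : IntervalIntegrable (fun φ : ℝ => fderiv ℝ ν (r, θ, φ) e3 e1)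
        MeasureTheory.volume 0 1 :=
      (((hDcont2 e3 e1).comp (by fun_prop : Continuous fun φ : ℝ => ((r : ℝ), θ, φ)))).intervalIntegrable _ _
    rw [intervalIntegral.integral_eq_sub_of_hasDerivAt hd hint]
    have := (hνper (r, θ, 0)).2
    simp only [zero_add] at this
    rw [this]
    ring
  -- pointwise identity from `i_X dν = 0`
  have hswapD : ∀ p : ℝ × ℝ × ℝ, p.1 ∈ Ioo a d →
      fderiv ℝ ν p e1 Xbar
        = Xbar.2.1 * fderiv ℝ ν p e2 e1 + Xbar.2.2 * fderiv ℝ ν p e3 e1 := by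
    intro p hp
    have h1 := hiXdν p hp e1
    rw [hX p] at h1
    have hρne : ρ p.1 ≠ 0 := (hρpos p.1 hp).ne'
    have hL : fderiv ℝ ν p (ρ p.1 • Xbar) e1 = ρ p.1 * fderiv ℝ ν p Xbar e1 := by
      rw [map_smul]; simp
    have hR : fderiv ℝ ν p e1 (ρ p.1 • Xbar) = ρ p.1 * fderiv ℝ ν p e1 Xbar := by
      rw [map_smul]; simp
    rw [hL, hR] at h1
    have h2 : fderiv ℝ ν p Xbar e1 = fderiv ℝ ν p e1 Xbar := mul_left_cancel₀ hρne h1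
    have hdecomp : Xbar = Xbar.2.1 • e2 + Xbar.2.2 • e3 := by
      rw [he2, he3]
      refine Prod.ext ?_ (Prod.ext ?_ ?_) <;> simp [hXbar]
    calc fderiv ℝ ν p e1 Xbar = fderiv ℝ ν p Xbar e1 := h2.symm
      _ = fderiv ℝ ν p (Xbar.2.1 • e2 + Xbar.2.2 • e3) e1 := by rw [← hdecomp]
      _ = Xbar.2.1 * fderiv ℝ ν p e2 e1 + Xbar.2.2 * fderiv ℝ ν p e3 e1 := by
          rw [map_add, map_smul, map_smul]; simp
  have huIcc : uIcc r₁ r₂ ⊆ Ioo a d := by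
    rcases le_total r₁ r₂ with h | h
    · rw [uIcc_of_le h]; exact Icc_subset_Ioo hr₁.1 hr₂.2
    · rw [uIcc_of_ge h]; exact Icc_subset_Ioo hr₂.1 hr₁.2
  -- integrability / continuity helpers
  have hk2cont : Continuous fun p : ℝ × ℝ × ℝ => fderiv ℝ ν p e2 e1 := hDcont2 e2 e1
  have hk3cont : Continuous fun p : ℝ × ℝ × ℝ => fderiv ℝ ν p e3 e1 := hDcont2 e3 e1
  -- the inner radial integrals are jointly continuous in the angles
  have hK2cont : Continuous fun q : ℝ × ℝ =>
      ∫ r in r₁..r₂, fderiv ℝ ν (r, q.1, q.2) e2 e1 := by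
    apply intervalIntegral.continuous_parametric_intervalIntegral_of_continuous'
    exact hk2cont.comp (by fun_prop)
  have hK3cont : Continuous fun q : ℝ × ℝ =>
      ∫ r in r₁..r₂, fderiv ℝ ν (r, q.1, q.2) e3 e1 := by
    apply intervalIntegral.continuous_parametric_intervalIntegral_of_continuous'
    exact hk3cont.comp (by fun_prop)
  -- main pointwise (in θ) computation
  have main : ∀ θ : ℝ,
      (∫ φ in (0:ℝ)..1, ν (r₂, θ, φ) Xbar) - (∫ φ in (0:ℝ)..1, ν (r₁, θ, φ) Xbar)
      = Xbar.2.1 * (∫ φ in (0:ℝ)..1, ∫ r in r₁..r₂, fderiv ℝ ν (r, θ, φ) e2 e1)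
        + Xbar.2.2 * (∫ φ in (0:ℝ)..1, ∫ r in r₁..r₂, fderiv ℝ ν (r, θ, φ) e3 e1) := by
    intro θ
    have hi1 : IntervalIntegrable (fun φ : ℝ => ν (r₁, θ, φ) Xbar) MeasureTheory.volume 0 1 :=
      ((hνcont.clm_apply continuous_const).comp (by fun_prop : Continuous fun φ : ℝ => ((r₁ : ℝ), θ, φ))).intervalIntegrable _ _
    have hi2 : IntervalIntegrable (fun φ : ℝ => ν (r₂, θ, φ) Xbar) MeasureTheory.volume 0 1 :=
      ((hνcont.clm_apply continuous_const).comp (by fun_prop : Continuous fun φ : ℝ => ((r₂ : ℝ), θ, φ))).intervalIntegrable _ _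
    rw [← intervalIntegral.integral_sub hi2 hi1]
    have step1 : ∀ φ : ℝ, ν (r₂, θ, φ) Xbar - ν (r₁, θ, φ) Xbar
        = Xbar.2.1 * (∫ r in r₁..r₂, fderiv ℝ ν (r, θ, φ) e2 e1)
          + Xbar.2.2 * (∫ r in r₁..r₂, fderiv ℝ ν (r, θ, φ) e3 e1) := by
      intro φ
      rw [hA θ φ]
      have hcongr : ∀ r ∈ uIcc r₁ r₂, fderiv ℝ ν (r, θ, φ) e1 Xbar
          = Xbar.2.1 * fderiv ℝ ν (r, θ, φ) e2 e1 + Xbar.2.2 * fderiv ℝ ν (r, θ, φ) e3 e1 :=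
        fun r hr => hswapD (r, θ, φ) (huIcc hr)
      rw [intervalIntegral.integral_congr hcongr]
      have hint2 : IntervalIntegrable (fun r : ℝ => Xbar.2.1 * fderiv ℝ ν (r, θ, φ) e2 e1)
          MeasureTheory.volume r₁ r₂ :=
        ((continuous_const.mul (hk2cont.comp (by fun_prop : Continuous fun r : ℝ => ((r : ℝ), θ, φ))))).intervalIntegrable _ _
      have hint3 : IntervalIntegrable (fun r : ℝ => Xbar.2.2 * fderiv ℝ ν (r, θ, φ) e3 e1)
          MeasureTheory.volume r₁ r₂ :=
        ((continuous_const.mul (hk3cont.comp (by fun_prop : Continuous fun r : ℝ => ((r : ℝ), θ, φ))))).intervalIntegrable _ _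
      rw [intervalIntegral.integral_add hint2 hint3,
        intervalIntegral.integral_const_mul, intervalIntegral.integral_const_mul]
    rw [intervalIntegral.integral_congr (fun φ _ => step1 φ)]
    have hint2 : IntervalIntegrable
        (fun φ : ℝ => Xbar.2.1 * ∫ r in r₁..r₂, fderiv ℝ ν (r, θ, φ) e2 e1)
        MeasureTheory.volume 0 1 :=
      (continuous_const.mul (hK2cont.comp (by fun_prop : Continuous fun φ : ℝ => ((θ : ℝ), φ)))).intervalIntegrable _ _
    have hint3 : IntervalIntegrable
        (fun φ : ℝ => Xbar.2.2 * ∫ r in r₁..r₂, fderiv ℝ ν (r, θ, φ) e3 e1)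
        MeasureTheory.volume 0 1 :=
      (continuous_const.mul (hK3cont.comp (by fun_prop : Continuous fun φ : ℝ => ((θ : ℝ), φ)))).intervalIntegrable _ _
    rw [intervalIntegral.integral_add hint2 hint3,
      intervalIntegral.integral_const_mul, intervalIntegral.integral_const_mul]
  -- the two angular averages of the radial integrals vanish
  have hvan3 : ∀ θ : ℝ,
      (∫ φ in (0:ℝ)..1, ∫ r in r₁..r₂, fderiv ℝ ν (r, θ, φ) e3 e1) = 0 := by
    intro θ
    rw [swap_intervalIntegral01 (fun φ r => fderiv ℝ ν (r, θ, φ) e3 e1)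
      (hk3cont.comp (by fun_prop)) r₁ r₂]
    simp only [hzero3, intervalIntegral.integral_zero]
  have hvan2 :
      (∫ θ in (0:ℝ)..1, ∫ φ in (0:ℝ)..1, ∫ r in r₁..r₂, fderiv ℝ ν (r, θ, φ) e2 e1) = 0 := by
    rw [swap_intervalIntegral_le
      (fun θ φ => ∫ r in r₁..r₂, fderiv ℝ ν (r, θ, φ) e2 e1) hK2cont zero_le_one zero_le_one]
    have : ∀ φ : ℝ,
        (∫ θ in (0:ℝ)..1, ∫ r in r₁..r₂, fderiv ℝ ν (r, θ, φ) e2 e1) = 0 := by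
      intro φ
      rw [swap_intervalIntegral01 (fun θ r => fderiv ℝ ν (r, θ, φ) e2 e1)
        (hk2cont.comp (by fun_prop)) r₁ r₂]
      simp only [hzero2, intervalIntegral.integral_zero]
    simp only [this, intervalIntegral.integral_zero]
  -- put everything together
  have key : (∫ θ in (0:ℝ)..1, ∫ φ in (0:ℝ)..1, ν (r₂, θ, φ) Xbar)
      - (∫ θ in (0:ℝ)..1, ∫ φ in (0:ℝ)..1, ν (r₁, θ, φ) Xbar) = 0 := by
    rw [← intervalIntegral.integral_sub]
    · rw [intervalIntegral.integral_congr (fun θ _ => main θ)]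
      have hint2 : IntervalIntegrable
          (fun θ : ℝ => Xbar.2.1 * ∫ φ in (0:ℝ)..1, ∫ r in r₁..r₂, fderiv ℝ ν (r, θ, φ) e2 e1)
          MeasureTheory.volume 0 1 := by
        apply Continuous.intervalIntegrable
        apply continuous_const.mul
        apply intervalIntegral.continuous_parametric_intervalIntegral_of_continuous'
        exact hK2cont.comp (by fun_prop)
      have hint3 : IntervalIntegrable
          (fun θ : ℝ => Xbar.2.2 * ∫ φ in (0:ℝ)..1, ∫ r in r₁..r₂, fderiv ℝ ν (r, θ, φ) e3 e1)
          MeasureTheory.volume 0 1 := by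
        apply Continuous.intervalIntegrable
        apply continuous_const.mul
        apply intervalIntegral.continuous_parametric_intervalIntegral_of_continuous'
        exact hK3cont.comp (by fun_prop)
      rw [intervalIntegral.integral_add hint2 hint3,
        intervalIntegral.integral_const_mul, intervalIntegral.integral_const_mul, hvan2]
      simp only [hvan3, intervalIntegral.integral_zero]
      ring
    · apply Continuous.intervalIntegrable
      apply intervalIntegral.continuous_parametric_intervalIntegral_of_continuous'
      exact (hνcont.clm_apply continuous_const).comp (by fun_prop)
    · apply Continuous.intervalIntegrable
      apply intervalIntegral.continuous_parametric_intervalIntegral_of_continuous'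
      exact (hνcont.clm_apply continuous_const).comp (by fun_prop)

  linarith [key]
end

section
/- Let a < d be real numbers, let ρ : ℝ → ℝ be continuous and positive on (a,d), and let X̄ ∈ ℝ³ be a constant vector with first component 0. Set X(p) := ρ(p₁) • X̄. Let λ : ℝ³ → (ℝ³ →L[ℝ] ℝ) be a C¹ toroidally periodic 1-form satisfying i_X dλ = −dr, i.e. Dλ(p)(X(p))(v) − Dλ(p)(v)(X(p)) = −v₁ for all p ∈ (a,d) × ℝ² and all v ∈ ℝ³ (where r denotes the first coordinate function). Then for all a < r₁ ≤ r₂ < d, the function c(r) := ∫_{[0,1]²} λ(r, θ, φ)(X̄) dθ dφ satisfies c(r₂) − c(r₁) = ∫_{r₁}^{r₂} (1/ρ(r)) dr. -/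
open Set MeasureTheory
set_option maxHeartbeats 1000000

lemma my_swap (f : ℝ → ℝ → ℝ) (hf : Continuous fun q : ℝ × ℝ => f q.1 q.2)
    {a b c d : ℝ} (hab : a ≤ b) (hcd : c ≤ d) :
    ∫ x in a..b, ∫ y in c..d, f x y = ∫ y in c..d, ∫ x in a..b, f x y := by
  have hint : Integrable (Function.uncurry f)
      ((volume.restrict (Ioc a b)).prod (volume.restrict (Ioc c d))) := by
    rw [Measure.prod_restrict]
    have : IntegrableOn (Function.uncurry f) (Icc a b ×ˢ Icc c d)
        (volume.prod volume) := by
      rw [← Measure.volume_eq_prod]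
      exact hf.continuousOn.integrableOn_compact (isCompact_Icc.prod isCompact_Icc)
    exact this.mono_set (Set.prod_mono Ioc_subset_Icc_self Ioc_subset_Icc_self)
  simp only [intervalIntegral.integral_of_le hab, intervalIntegral.integral_of_le hcd]
  exact integral_integral_swap hint

lemma aux_cont (lam : ℝ × ℝ × ℝ → (ℝ × ℝ × ℝ →L[ℝ] ℝ)) (hl : ContDiff ℝ 1 lam)
    (u v : ℝ × ℝ × ℝ) : Continuous fun p => fderiv ℝ lam p u v := by
  have h1 : Continuous (fderiv ℝ lam) := hl.continuous_fderiv one_ne_zero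
  exact (h1.clm_apply continuous_const).clm_apply continuous_const

lemma aux_deriv_along (lam : ℝ × ℝ × ℝ → (ℝ × ℝ × ℝ →L[ℝ] ℝ)) (hl : ContDiff ℝ 1 lam)
    (γ : ℝ → ℝ × ℝ × ℝ) (γ' : ℝ × ℝ × ℝ) (t : ℝ) (hγ : HasDerivAt γ γ' t) (u : ℝ × ℝ × ℝ) :
    HasDerivAt (fun s => lam (γ s) u) (fderiv ℝ lam (γ t) γ' u) t := by
  have h1 : HasDerivAt (fun s => lam (γ s)) (fderiv ℝ lam (γ t) γ') t :=
    ((hl.differentiable one_ne_zero (γ t)).hasFDerivAt).comp_hasDerivAt t hγ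
  have h2 := h1.clm_apply (hasDerivAt_const t u)
  simpa using h2

lemma aux_deriv_r (lam : ℝ × ℝ × ℝ → (ℝ × ℝ × ℝ →L[ℝ] ℝ)) (hl : ContDiff ℝ 1 lam)
    (θ φ : ℝ) (u : ℝ × ℝ × ℝ) (r : ℝ) :
    HasDerivAt (fun s => lam (s, θ, φ) u) (fderiv ℝ lam (r, θ, φ) (1, 0, 0) u) r :=
  aux_deriv_along lam hl (fun s => (s, θ, φ)) (1, 0, 0) r
    (HasDerivAt.prodMk (hasDerivAt_id r) (HasDerivAt.prodMk (hasDerivAt_const r θ) (hasDerivAt_const r φ))) u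

lemma aux_deriv_θ (lam : ℝ × ℝ × ℝ → (ℝ × ℝ × ℝ →L[ℝ] ℝ)) (hl : ContDiff ℝ 1 lam)
    (r φ : ℝ) (u : ℝ × ℝ × ℝ) (θ : ℝ) :
    HasDerivAt (fun s => lam (r, s, φ) u) (fderiv ℝ lam (r, θ, φ) (0, 1, 0) u) θ :=
  aux_deriv_along lam hl (fun s => (r, s, φ)) (0, 1, 0) θ
    (HasDerivAt.prodMk (hasDerivAt_const θ r) (HasDerivAt.prodMk (hasDerivAt_id θ) (hasDerivAt_const θ φ))) u

lemma aux_deriv_φ (lam : ℝ × ℝ × ℝ → (ℝ × ℝ × ℝ →L[ℝ] ℝ)) (hl : ContDiff ℝ 1 lam)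
    (r θ : ℝ) (u : ℝ × ℝ × ℝ) (φ : ℝ) :
    HasDerivAt (fun s => lam (r, θ, s) u) (fderiv ℝ lam (r, θ, φ) (0, 0, 1) u) φ :=
  aux_deriv_along lam hl (fun s => (r, θ, s)) (0, 0, 1) φ
    (HasDerivAt.prodMk (hasDerivAt_const φ r) (HasDerivAt.prodMk (hasDerivAt_const φ θ) (hasDerivAt_id φ))) u

lemma aux_per_θ (lam : ℝ × ℝ × ℝ → (ℝ × ℝ × ℝ →L[ℝ] ℝ)) (hl : ContDiff ℝ 1 lam)
    (hper : TorPeriodic lam) (r φ : ℝ) (u : ℝ × ℝ × ℝ) :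
    ∫ θ in (0:ℝ)..1, fderiv ℝ lam (r, θ, φ) (0, 1, 0) u = 0 := by
  have hc : Continuous fun θ : ℝ => fderiv ℝ lam (r, θ, φ) (0, 1, 0) u :=
    (aux_cont lam hl (0,1,0) u).comp (by fun_prop)
  rw [intervalIntegral.integral_eq_sub_of_hasDerivAt
      (fun θ _ => aux_deriv_θ lam hl r φ u θ) (hc.intervalIntegrable _ _)]
  have := (hper (r, 0, φ)).1
  simp only [zero_add] at this
  rw [this]; ring

lemma aux_per_φ (lam : ℝ × ℝ × ℝ → (ℝ × ℝ × ℝ →L[ℝ] ℝ)) (hl : ContDiff ℝ 1 lam)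
    (hper : TorPeriodic lam) (r θ : ℝ) (u : ℝ × ℝ × ℝ) :
    ∫ φ in (0:ℝ)..1, fderiv ℝ lam (r, θ, φ) (0, 0, 1) u = 0 := by
  have hc : Continuous fun φ : ℝ => fderiv ℝ lam (r, θ, φ) (0, 0, 1) u :=
    (aux_cont lam hl (0,0,1) u).comp (by fun_prop)
  rw [intervalIntegral.integral_eq_sub_of_hasDerivAt
      (fun φ _ => aux_deriv_φ lam hl r θ u φ) (hc.intervalIntegrable _ _)]
  have := (hper (r, θ, 0)).2
  simp only [zero_add] at this
  rw [this]; ring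

/-- For a vector field `X(p) = ρ(p₁) • X̄` tangent to the tori `{r} × T²` and a
`C¹` toroidally periodic `1`-form `λ` with `i_X dλ = -dr` on `(a,d) × T²`, the torus averages
`c(r) = ∫ λ(r,θ,φ)(X̄) dθ dφ` satisfy `c(r₂) - c(r₁) = ∫_{r₁}^{r₂} dr/ρ(r)`. -/
theorem torus_average_difference_of_euler_form
    (a d : ℝ) (had : a < d)
    (ρ : ℝ → ℝ) (hρcont : Continuous ρ) (hρpos : ∀ r ∈ Ioo a d, 0 < ρ r)
    (Xbar : ℝ × ℝ × ℝ) (hXbar : Xbar.1 = 0)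
    (X : ℝ × ℝ × ℝ → ℝ × ℝ × ℝ) (hX : ∀ p, X p = ρ p.1 • Xbar)
    (lam : ℝ × ℝ × ℝ → (ℝ × ℝ × ℝ →L[ℝ] ℝ))
    (hlamC1 : ContDiff ℝ 1 lam) (hlamper : TorPeriodic lam)
    (hiXdlam : ∀ p : ℝ × ℝ × ℝ, p.1 ∈ Ioo a d →
      ∀ v : ℝ × ℝ × ℝ, fderiv ℝ lam p (X p) v - fderiv ℝ lam p v (X p) = -v.1) :
    ∀ r₁ r₂ : ℝ, a < r₁ → r₁ ≤ r₂ → r₂ < d →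
      (∫ θ in (0:ℝ)..1, ∫ φ in (0:ℝ)..1, lam (r₂, θ, φ) Xbar) -
      (∫ θ in (0:ℝ)..1, ∫ φ in (0:ℝ)..1, lam (r₁, θ, φ) Xbar) =
      ∫ r in r₁..r₂, 1 / ρ r := by
  intro r₁ r₂ har₁ hr₁₂ hr₂d
  have h01 : (0:ℝ) ≤ 1 := zero_le_one
  -- basic continuity facts
  have hlamc : Continuous lam := hlamC1.continuous
  have hCuv : ∀ u v : ℝ × ℝ × ℝ, Continuous fun p => fderiv ℝ lam p u v :=
    fun u v => aux_cont lam hlamC1 u v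
  -- abbreviations
  set C : ℝ := ∫ r in r₁..r₂, 1 / ρ r with hC
  -- membership in Ioo a d
  have hmem : ∀ r ∈ uIcc r₁ r₂, r ∈ Ioo a d := by
    intro r hr
    rw [uIcc_of_le hr₁₂] at hr
    exact ⟨lt_of_lt_of_le har₁ hr.1, lt_of_le_of_lt hr.2 hr₂d⟩
  -- Step A : FTC in r
  have stepA : ∀ θ φ : ℝ, lam (r₂, θ, φ) Xbar - lam (r₁, θ, φ) Xbar =
      ∫ r in r₁..r₂, fderiv ℝ lam (r, θ, φ) (1,0,0) Xbar := by
    intro θ φ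
    have hc : Continuous fun r : ℝ => fderiv ℝ lam (r, θ, φ) (1,0,0) Xbar :=
      (hCuv (1,0,0) Xbar).comp (by fun_prop)
    exact (intervalIntegral.integral_eq_sub_of_hasDerivAt
      (fun r _ => aux_deriv_r lam hlamC1 θ φ Xbar r) (hc.intervalIntegrable _ _)).symm
  -- Step B : pointwise identity on [r₁, r₂]
  have stepB : ∀ r ∈ uIcc r₁ r₂, ∀ θ φ : ℝ,
      fderiv ℝ lam (r, θ, φ) (1,0,0) Xbar =
      fderiv ℝ lam (r, θ, φ) Xbar (1,0,0) + 1 / ρ r := by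
    intro r hr θ φ
    have hrm := hmem r hr
    have hρ := hρpos r hrm
    have key := hiXdlam (r, θ, φ) hrm ((1:ℝ),(0:ℝ),(0:ℝ))
    rw [hX (r, θ, φ)] at key
    have k1 : (fderiv ℝ lam (r,θ,φ)) (ρ r • Xbar) = ρ r • (fderiv ℝ lam (r,θ,φ)) Xbar :=
      (fderiv ℝ lam (r,θ,φ)).map_smul _ _
    have k2 : ((fderiv ℝ lam (r,θ,φ)) ((1:ℝ),(0:ℝ),(0:ℝ))) (ρ r • Xbar) =
        ρ r • ((fderiv ℝ lam (r,θ,φ)) (1,0,0)) Xbar :=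
      ((fderiv ℝ lam (r,θ,φ)) (1,0,0)).map_smul _ _
    rw [k1, k2] at key
    simp only [ContinuousLinearMap.smul_apply, smul_eq_mul] at key
    norm_num at key
    have hρne : ρ r ≠ 0 := ne_of_gt hρ
    field_simp
    nlinarith [key]
  -- component decomposition of Xbar
  have hXdecomp : Xbar = Xbar.2.1 • ((0:ℝ),(1:ℝ),(0:ℝ)) + Xbar.2.2 • ((0:ℝ),(0:ℝ),(1:ℝ)) := by
    ext
    · simp [hXbar]
    · simp
    · simp
  have hsplit : ∀ p : ℝ × ℝ × ℝ, fderiv ℝ lam p Xbar (1,0,0) =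
      Xbar.2.1 * fderiv ℝ lam p (0,1,0) (1,0,0) + Xbar.2.2 * fderiv ℝ lam p (0,0,1) (1,0,0) := by
    intro p
    conv_lhs => rw [hXdecomp]
    rw [(fderiv ℝ lam p).map_add, ((fderiv ℝ lam p).map_smul), ((fderiv ℝ lam p).map_smul)]
    simp [ContinuousLinearMap.add_apply, ContinuousLinearMap.smul_apply, smul_eq_mul]
  -- continuity of parametric integrals
  have hG2 : Continuous fun q : ℝ × ℝ => ∫ r in r₁..r₂, fderiv ℝ lam (r, q.1, q.2) Xbar (1,0,0) := by
    apply intervalIntegral.continuous_parametric_intervalIntegral_of_continuous'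
    exact (hCuv Xbar (1,0,0)).comp (by fun_prop)
  -- Step C : inner integral over r, rewritten
  have stepC : ∀ θ φ : ℝ,
      ∫ r in r₁..r₂, fderiv ℝ lam (r, θ, φ) (1,0,0) Xbar =
      (∫ r in r₁..r₂, fderiv ℝ lam (r, θ, φ) Xbar (1,0,0)) + C := by
    intro θ φ
    have hc1 : Continuous fun r : ℝ => fderiv ℝ lam (r, θ, φ) Xbar (1,0,0) :=
      (hCuv Xbar (1,0,0)).comp (by fun_prop)
    have hρint : IntervalIntegrable (fun r => 1 / ρ r) volume r₁ r₂ := by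
      apply ContinuousOn.intervalIntegrable
      apply ContinuousOn.div continuousOn_const (hρcont.continuousOn)
      intro r hr
      exact ne_of_gt (hρpos r (hmem r hr))
    rw [intervalIntegral.integral_congr (g := fun r =>
        fderiv ℝ lam (r, θ, φ) Xbar (1,0,0) + 1 / ρ r) (fun r hr => stepB r hr θ φ)]
    rw [intervalIntegral.integral_add (hc1.intervalIntegrable _ _) hρint]
  -- the θ- and φ- average of the tangential derivative term vanishes
  have hzero : (∫ θ in (0:ℝ)..1, ∫ φ in (0:ℝ)..1,
      ∫ r in r₁..r₂, fderiv ℝ lam (r, θ, φ) Xbar (1,0,0)) = 0 := by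
    -- split into the two tangential directions
    have hsplit3 : ∀ θ φ : ℝ, (∫ r in r₁..r₂, fderiv ℝ lam (r, θ, φ) Xbar (1,0,0)) =
        Xbar.2.1 * (∫ r in r₁..r₂, fderiv ℝ lam (r, θ, φ) (0,1,0) (1,0,0)) +
        Xbar.2.2 * (∫ r in r₁..r₂, fderiv ℝ lam (r, θ, φ) (0,0,1) (1,0,0)) := by
      intro θ φ
      have hc2 : Continuous fun r : ℝ => fderiv ℝ lam (r, θ, φ) (0,1,0) (1,0,0) :=
        (hCuv (0,1,0) (1,0,0)).comp (by fun_prop)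
      have hc3 : Continuous fun r : ℝ => fderiv ℝ lam (r, θ, φ) (0,0,1) (1,0,0) :=
        (hCuv (0,0,1) (1,0,0)).comp (by fun_prop)
      rw [← intervalIntegral.integral_const_mul, ← intervalIntegral.integral_const_mul,
        ← intervalIntegral.integral_add
          ((hc2.intervalIntegrable _ _).const_mul _) ((hc3.intervalIntegrable _ _).const_mul _)]
      exact intervalIntegral.integral_congr (fun r _ => hsplit (r, θ, φ))
    have hG2' : Continuous fun q : ℝ × ℝ => ∫ r in r₁..r₂, fderiv ℝ lam (r, q.1, q.2) (0,1,0) (1,0,0) := by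
      apply intervalIntegral.continuous_parametric_intervalIntegral_of_continuous'
      exact (hCuv (0,1,0) (1,0,0)).comp (by fun_prop)
    have hG3' : Continuous fun q : ℝ × ℝ => ∫ r in r₁..r₂, fderiv ℝ lam (r, q.1, q.2) (0,0,1) (1,0,0) := by
      apply intervalIntegral.continuous_parametric_intervalIntegral_of_continuous'
      exact (hCuv (0,0,1) (1,0,0)).comp (by fun_prop)
    -- I₃ = 0 : for each θ, swap φ and r and use periodicity in φ
    have hI3 : ∀ θ : ℝ, (∫ φ in (0:ℝ)..1,
        ∫ r in r₁..r₂, fderiv ℝ lam (r, θ, φ) (0,0,1) (1,0,0)) = 0 := by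
      intro θ
      rw [my_swap (fun φ r => fderiv ℝ lam (r, θ, φ) (0,0,1) (1,0,0))
        ((hCuv (0,0,1) (1,0,0)).comp (by fun_prop)) h01 hr₁₂]
      simp only [aux_per_φ lam hlamC1 hlamper _ θ (1,0,0)]
      simp
    -- I₂ = 0 : swap θ and φ, then θ and r, then use periodicity in θ
    have hI2 : (∫ θ in (0:ℝ)..1, ∫ φ in (0:ℝ)..1,
        ∫ r in r₁..r₂, fderiv ℝ lam (r, θ, φ) (0,1,0) (1,0,0)) = 0 := by
      rw [my_swap (fun θ φ => ∫ r in r₁..r₂, fderiv ℝ lam (r, θ, φ) (0,1,0) (1,0,0))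
        hG2' h01 h01]
      have : ∀ φ : ℝ, (∫ θ in (0:ℝ)..1,
          ∫ r in r₁..r₂, fderiv ℝ lam (r, θ, φ) (0,1,0) (1,0,0)) = 0 := by
        intro φ
        rw [my_swap (fun θ r => fderiv ℝ lam (r, θ, φ) (0,1,0) (1,0,0))
          ((hCuv (0,1,0) (1,0,0)).comp (by fun_prop)) h01 hr₁₂]
        simp only [aux_per_θ lam hlamC1 hlamper _ φ (1,0,0)]
        simp
      simp only [this]
      simp
    calc (∫ θ in (0:ℝ)..1, ∫ φ in (0:ℝ)..1,
          ∫ r in r₁..r₂, fderiv ℝ lam (r, θ, φ) Xbar (1,0,0))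
        = ∫ θ in (0:ℝ)..1, ∫ φ in (0:ℝ)..1,
          (Xbar.2.1 * (∫ r in r₁..r₂, fderiv ℝ lam (r, θ, φ) (0,1,0) (1,0,0)) +
           Xbar.2.2 * (∫ r in r₁..r₂, fderiv ℝ lam (r, θ, φ) (0,0,1) (1,0,0))) := by
          apply intervalIntegral.integral_congr
          intro θ _
          dsimp only
          apply intervalIntegral.integral_congr
          intro φ _
          dsimp only
          exact hsplit3 θ φ
      _ = Xbar.2.1 * (∫ θ in (0:ℝ)..1, ∫ φ in (0:ℝ)..1,
            ∫ r in r₁..r₂, fderiv ℝ lam (r, θ, φ) (0,1,0) (1,0,0)) +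
          Xbar.2.2 * (∫ θ in (0:ℝ)..1, ∫ φ in (0:ℝ)..1,
            ∫ r in r₁..r₂, fderiv ℝ lam (r, θ, φ) (0,0,1) (1,0,0)) := by
          have hint2 : ∀ θ : ℝ, IntervalIntegrable
              (fun φ => ∫ r in r₁..r₂, fderiv ℝ lam (r, θ, φ) (0,1,0) (1,0,0)) volume 0 1 := by
            intro θ
            have hc : Continuous fun φ : ℝ =>
                ∫ r in r₁..r₂, fderiv ℝ lam (r, θ, φ) (0,1,0) (1,0,0) := by
              apply intervalIntegral.continuous_parametric_intervalIntegral_of_continuous'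
              exact (hCuv (0,1,0) (1,0,0)).comp (by fun_prop)
            exact hc.intervalIntegrable _ _
          have hint3 : ∀ θ : ℝ, IntervalIntegrable
              (fun φ => ∫ r in r₁..r₂, fderiv ℝ lam (r, θ, φ) (0,0,1) (1,0,0)) volume 0 1 := by
            intro θ
            have hc : Continuous fun φ : ℝ =>
                ∫ r in r₁..r₂, fderiv ℝ lam (r, θ, φ) (0,0,1) (1,0,0) := by
              apply intervalIntegral.continuous_parametric_intervalIntegral_of_continuous'
              exact (hCuv (0,0,1) (1,0,0)).comp (by fun_prop)
            exact hc.intervalIntegrable _ _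
          have inner_eq : ∀ θ : ℝ, (∫ φ in (0:ℝ)..1,
              (Xbar.2.1 * (∫ r in r₁..r₂, fderiv ℝ lam (r, θ, φ) (0,1,0) (1,0,0)) +
               Xbar.2.2 * (∫ r in r₁..r₂, fderiv ℝ lam (r, θ, φ) (0,0,1) (1,0,0)))) =
              Xbar.2.1 * (∫ φ in (0:ℝ)..1, ∫ r in r₁..r₂, fderiv ℝ lam (r, θ, φ) (0,1,0) (1,0,0)) +
              Xbar.2.2 * (∫ φ in (0:ℝ)..1, ∫ r in r₁..r₂, fderiv ℝ lam (r, θ, φ) (0,0,1) (1,0,0)) := by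
            intro θ
            rw [intervalIntegral.integral_add ((hint2 θ).const_mul _) ((hint3 θ).const_mul _),
              intervalIntegral.integral_const_mul, intervalIntegral.integral_const_mul]
          rw [intervalIntegral.integral_congr (g := fun θ =>
              Xbar.2.1 * (∫ φ in (0:ℝ)..1, ∫ r in r₁..r₂, fderiv ℝ lam (r, θ, φ) (0,1,0) (1,0,0)) +
              Xbar.2.2 * (∫ φ in (0:ℝ)..1, ∫ r in r₁..r₂, fderiv ℝ lam (r, θ, φ) (0,0,1) (1,0,0)))
            (fun θ _ => inner_eq θ)]
          have hc2' : Continuous fun θ : ℝ =>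
              ∫ φ in (0:ℝ)..1, ∫ r in r₁..r₂, fderiv ℝ lam (r, θ, φ) (0,1,0) (1,0,0) := by
            apply intervalIntegral.continuous_parametric_intervalIntegral_of_continuous'
            exact hG2'
          have hc3' : Continuous fun θ : ℝ =>
              ∫ φ in (0:ℝ)..1, ∫ r in r₁..r₂, fderiv ℝ lam (r, θ, φ) (0,0,1) (1,0,0) := by
            apply intervalIntegral.continuous_parametric_intervalIntegral_of_continuous'
            exact hG3'
          rw [intervalIntegral.integral_add ((hc2'.intervalIntegrable _ _).const_mul _)
              ((hc3'.intervalIntegrable _ _).const_mul _),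
            intervalIntegral.integral_const_mul, intervalIntegral.integral_const_mul]
      _ = 0 := by
          rw [hI2]
          simp only [hI3]
          simp
  -- put everything together
  have hint_lam : ∀ r : ℝ, IntervalIntegrable
      (fun θ => ∫ φ in (0:ℝ)..1, lam (r, θ, φ) Xbar) volume 0 1 := by
    intro r
    have : Continuous fun θ : ℝ => ∫ φ in (0:ℝ)..1, lam (r, θ, φ) Xbar := by
      apply intervalIntegral.continuous_parametric_intervalIntegral_of_continuous'
      exact ((hlamc.clm_apply continuous_const).comp (by fun_prop) : Continuous
        fun q : ℝ × ℝ => lam (r, q.1, q.2) Xbar).comp (by fun_prop)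
    exact this.intervalIntegrable _ _
  calc (∫ θ in (0:ℝ)..1, ∫ φ in (0:ℝ)..1, lam (r₂, θ, φ) Xbar) -
      (∫ θ in (0:ℝ)..1, ∫ φ in (0:ℝ)..1, lam (r₁, θ, φ) Xbar)
      = ∫ θ in (0:ℝ)..1, ((∫ φ in (0:ℝ)..1, lam (r₂, θ, φ) Xbar) -
          (∫ φ in (0:ℝ)..1, lam (r₁, θ, φ) Xbar)) := by
        rw [intervalIntegral.integral_sub (hint_lam r₂) (hint_lam r₁)]
    _ = ∫ θ in (0:ℝ)..1, ∫ φ in (0:ℝ)..1,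
          (lam (r₂, θ, φ) Xbar - lam (r₁, θ, φ) Xbar) := by
        apply intervalIntegral.integral_congr
        intro θ _
        dsimp only
        have h2 : Continuous fun φ : ℝ => lam (r₂, θ, φ) Xbar :=
          (hlamc.clm_apply continuous_const).comp (by fun_prop)
        have h1 : Continuous fun φ : ℝ => lam (r₁, θ, φ) Xbar :=
          (hlamc.clm_apply continuous_const).comp (by fun_prop)
        rw [intervalIntegral.integral_sub (h2.intervalIntegrable _ _)
          (h1.intervalIntegrable _ _)]
    _ = ∫ θ in (0:ℝ)..1, ∫ φ in (0:ℝ)..1,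
          ((∫ r in r₁..r₂, fderiv ℝ lam (r, θ, φ) Xbar (1,0,0)) + C) := by
        apply intervalIntegral.integral_congr
        intro θ _
        dsimp only
        apply intervalIntegral.integral_congr
        intro φ _
        dsimp only
        rw [stepA θ φ, stepC θ φ]
    _ = (∫ θ in (0:ℝ)..1, ∫ φ in (0:ℝ)..1,
          ∫ r in r₁..r₂, fderiv ℝ lam (r, θ, φ) Xbar (1,0,0)) + C := by
        have inner_eq : ∀ θ : ℝ, (∫ φ in (0:ℝ)..1,
            ((∫ r in r₁..r₂, fderiv ℝ lam (r, θ, φ) Xbar (1,0,0)) + C)) =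
            (∫ φ in (0:ℝ)..1, ∫ r in r₁..r₂, fderiv ℝ lam (r, θ, φ) Xbar (1,0,0)) + C := by
          intro θ
          have hcφ : Continuous fun φ : ℝ =>
              ∫ r in r₁..r₂, fderiv ℝ lam (r, θ, φ) Xbar (1,0,0) := by
            apply intervalIntegral.continuous_parametric_intervalIntegral_of_continuous'
            exact (hCuv Xbar (1,0,0)).comp (by fun_prop)
          rw [intervalIntegral.integral_add (hcφ.intervalIntegrable _ _)
            intervalIntegrable_const]
          simp
        rw [intervalIntegral.integral_congr (g := fun θ =>
            (∫ φ in (0:ℝ)..1, ∫ r in r₁..r₂, fderiv ℝ lam (r, θ, φ) Xbar (1,0,0)) + C)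
          (fun θ _ => inner_eq θ)]
        have hcout : Continuous fun θ : ℝ =>
            ∫ φ in (0:ℝ)..1, ∫ r in r₁..r₂, fderiv ℝ lam (r, θ, φ) Xbar (1,0,0) := by
          apply intervalIntegral.continuous_parametric_intervalIntegral_of_continuous'
          exact hG2
        rw [intervalIntegral.integral_add (hcout.intervalIntegrable _ _)
          intervalIntegrable_const]
        simp
    _ = C := by rw [hzero]; ring
end

section
/- Let ε > 0, T₀ ∈ ℝ, and let χ : ℝ → ℝ be differentiable on [0, ε) with χ(s) ≥ 0 and χ'(s) ≥ 0 for all s ∈ [0, ε), and χ(0) = 0. Define H : ℝ² → ℝ by H(x,y) = T₀ + χ(x² + y²)·(y² − x²). Then every critical point (x,y) of H with x² + y² < ε satisfies χ(x² + y²) = 0. -/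
open Set

/-- Critical points of `H(x,y) = T₀ + χ(x² + y²)(y² − x²)` inside the disk
`x² + y² < ε`, for a nonnegative nondecreasing differentiable cutoff `χ` with `χ(0) = 0`,
satisfy `χ(x² + y²) = 0`. -/
theorem critical_points_of_modified_hamiltonian
    (ε : ℝ) (hε : 0 < ε) (T₀ : ℝ)
    (χ : ℝ → ℝ)
    (hχdiff : ∀ s ∈ Ico (0:ℝ) ε, DifferentiableAt ℝ χ s)
    (hχnonneg : ∀ s ∈ Ico (0:ℝ) ε, 0 ≤ χ s)
    (hχ'nonneg : ∀ s ∈ Ico (0:ℝ) ε, 0 ≤ deriv χ s)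
    (hχzero : χ 0 = 0)
    (H : ℝ × ℝ → ℝ)
    (hH : ∀ p : ℝ × ℝ, H p = T₀ + χ (p.1 ^ 2 + p.2 ^ 2) * (p.2 ^ 2 - p.1 ^ 2))
    (x y : ℝ) (hxy : x ^ 2 + y ^ 2 < ε)
    (hcrit : fderiv ℝ H (x, y) = 0) :
    χ (x ^ 2 + y ^ 2) = 0 := by
  have hH' : H = fun p : ℝ × ℝ => T₀ + χ (p.1 ^ 2 + p.2 ^ 2) * (p.2 ^ 2 - p.1 ^ 2) :=
    funext hH
  subst hH'
  have hs : x ^ 2 + y ^ 2 ∈ Ico (0:ℝ) ε := ⟨by positivity, hxy⟩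
  have hφ : HasFDerivAt (fun p : ℝ × ℝ => p.1 ^ 2 + p.2 ^ 2)
      (((2:ℕ) * (x:ℝ) ^ 1) • (ContinuousLinearMap.fst ℝ ℝ ℝ)
        + ((2:ℕ) * (y:ℝ) ^ 1) • (ContinuousLinearMap.snd ℝ ℝ ℝ)) (x, y) :=
    (((hasDerivAt_pow 2 x).comp_hasFDerivAt (h₂ := fun t : ℝ => t ^ 2) (x, y) hasFDerivAt_fst).add
      ((hasDerivAt_pow 2 y).comp_hasFDerivAt (h₂ := fun t : ℝ => t ^ 2) (x, y) hasFDerivAt_snd))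
  have hψ : HasFDerivAt (fun p : ℝ × ℝ => p.2 ^ 2 - p.1 ^ 2)
      (((2:ℕ) * (y:ℝ) ^ 1) • (ContinuousLinearMap.snd ℝ ℝ ℝ)
        - ((2:ℕ) * (x:ℝ) ^ 1) • (ContinuousLinearMap.fst ℝ ℝ ℝ)) (x, y) :=
    (((hasDerivAt_pow 2 y).comp_hasFDerivAt (h₂ := fun t : ℝ => t ^ 2) (x, y) hasFDerivAt_snd).sub
      ((hasDerivAt_pow 2 x).comp_hasFDerivAt (h₂ := fun t : ℝ => t ^ 2) (x, y) hasFDerivAt_fst))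
  have hχ' : HasDerivAt χ (deriv χ (x ^ 2 + y ^ 2)) (x ^ 2 + y ^ 2) :=
    (hχdiff _ hs).hasDerivAt
  have hcomp : HasFDerivAt (fun p : ℝ × ℝ => χ (p.1 ^ 2 + p.2 ^ 2))
      (deriv χ (x ^ 2 + y ^ 2) • (((2:ℕ) * (x:ℝ) ^ 1) • (ContinuousLinearMap.fst ℝ ℝ ℝ)
        + ((2:ℕ) * (y:ℝ) ^ 1) • (ContinuousLinearMap.snd ℝ ℝ ℝ))) (x, y) :=
    hχ'.comp_hasFDerivAt (x, y) hφ
  have hmul := (hcomp.mul hψ).const_add T₀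
  have hD : fderiv ℝ (fun p : ℝ × ℝ => T₀ + χ (p.1 ^ 2 + p.2 ^ 2) * (p.2 ^ 2 - p.1 ^ 2)) (x, y)
      = _ := hmul.fderiv
  rw [hcrit] at hD
  have e1 := congrFun (congrArg (fun L : (ℝ × ℝ) →L[ℝ] ℝ => (L : ℝ × ℝ → ℝ)) hD) ((1:ℝ), (0:ℝ))
  have e2 := congrFun (congrArg (fun L : (ℝ × ℝ) →L[ℝ] ℝ => (L : ℝ × ℝ → ℝ)) hD) ((0:ℝ), (1:ℝ))
  simp [ContinuousLinearMap.add_apply, ContinuousLinearMap.smul_apply,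
    ContinuousLinearMap.sub_apply] at e1 e2
  have hχn := hχnonneg _ hs
  have hχ'n := hχ'nonneg _ hs
  have e3 : deriv χ (x ^ 2 + y ^ 2) * (y ^ 2 - x ^ 2) ^ 2
      + χ (x ^ 2 + y ^ 2) * (x ^ 2 + y ^ 2) = 0 := by
    linear_combination (-(y)/2) * e2 + (x/2) * e1
  have h4 : 0 ≤ deriv χ (x ^ 2 + y ^ 2) * (y ^ 2 - x ^ 2) ^ 2 :=
    mul_nonneg hχ'n (sq_nonneg _)
  have h5 : 0 ≤ χ (x ^ 2 + y ^ 2) * (x ^ 2 + y ^ 2) :=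
    mul_nonneg hχn (by positivity)
  have key : χ (x ^ 2 + y ^ 2) * (x ^ 2 + y ^ 2) = 0 := by linarith
  rcases mul_eq_zero.mp key with h | h
  · exact h
  · rw [h, hχzero]
end
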